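/- M is the internal direct sum of ker(ρ(e)) and range(ρ(f)), where ρ(z) : M → M denotes the action m ↦ z • m; that is, every finite-dimensional module over a Lie algebra containing an sl₂-triple (h, e, f) decomposes as the direct sum of the kernel of the raising operator and the image of the lowering operator. -/

import Mathlib

open LinearMap Module

section core
set_option linter.unusedSectionVars false
variable {K M : Type*} [Field K] [CharZero K] [AddCommGroup M] [Module K M]
  [FiniteDimensional K M]

lemma nilp_aux (E H : Module.End K M) (hHE : H * E - E * H = (2:K) • E) :
    IsNilpotent E := by
  have hHE' : H * E = E * H + (2:K) • E := by rw [← hHE]; abel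
  have hpow : ∀ n : ℕ, H * E ^ n = E ^ n * H + ((2 * n : K)) • E ^ n := by
    intro n
    induction n with
    | zero => simp
    | succ n ih =>
      rw [pow_succ, ← mul_assoc, ih, add_mul, smul_mul_assoc, mul_assoc, hHE',
        mul_add, mul_smul_comm, ← pow_succ]
      rw [← mul_assoc, ← pow_succ]
      push_cast
      module
  obtain ⟨N, hN⟩ : ∃ N, range (E ^ (N+1)) = range (E ^ N) := by
    obtain ⟨k, hk⟩ := Filter.eventually_atTop.mp E.eventually_iInf_range_pow_eq
    exact ⟨k, (hk (k+1) (by omega)).symm.trans (hk k le_rfl)⟩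
  set V := range (E ^ N) with hV
  have hEV : ∀ x ∈ V, E x ∈ V := by
    intro x hx
    rw [← hN]
    obtain ⟨y, rfl⟩ := hx
    exact ⟨y, by simp [pow_succ']⟩
  have hHV : ∀ x ∈ V, H x ∈ V := by
    rintro x ⟨y, rfl⟩
    have := congrArg (fun (f : Module.End K M) => f y) (hpow N)
    simp only [Module.End.mul_apply, LinearMap.add_apply, LinearMap.smul_apply] at this
    rw [show H ((E^N) y) = (E^N) (H y) + (2*N:K) • (E^N) y from this]
    exact add_mem ⟨H y, rfl⟩ (Submodule.smul_mem _ _ ⟨y, rfl⟩)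
  let E' : Module.End K V := E.restrict hEV
  let H' : Module.End K V := H.restrict hHV
  have hrel : H' * E' - E' * H' = (2:K) • E' := by
    ext ⟨x, hx⟩
    have := congrArg (fun (f : Module.End K M) => f x) hHE
    simpa [E', H', LinearMap.restrict_apply, Subtype.ext_iff] using this
  have hsurj : Function.Surjective E' := by
    rintro ⟨y, hy⟩
    rw [← hN] at hy
    obtain ⟨z, rfl⟩ := hy
    refine ⟨⟨(E^N) z, ⟨z, rfl⟩⟩, ?_⟩
    ext
    simp [E', LinearMap.restrict_apply, pow_succ']
  have hbij : Function.Bijective E' :=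
    ⟨LinearMap.injective_iff_surjective.mpr hsurj, hsurj⟩
  have hunit : IsUnit E' := (Module.End.isUnit_iff E').mpr hbij
  obtain ⟨u, hu⟩ := hunit
  have key : (2:K) • (1 : Module.End K V) = H' - ↑u * H' * ↑u⁻¹ := by
    have h1 := hrel
    rw [← hu] at h1
    calc (2:K) • (1 : Module.End K V) = ((2:K) • (u : Module.End K V)) * ↑u⁻¹ := by
          rw [smul_mul_assoc, u.mul_inv]
      _ = (H' * ↑u - ↑u * H') * ↑u⁻¹ := by rw [h1]
      _ = H' * (↑u * ↑u⁻¹) - ↑u * H' * ↑u⁻¹ := by rw [sub_mul, mul_assoc]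
      _ = H' - ↑u * H' * ↑u⁻¹ := by rw [u.mul_inv, mul_one]
  have tr := congrArg (LinearMap.trace K V) key
  rw [map_smul, LinearMap.trace_one, map_sub, LinearMap.trace_conj] at tr
  rw [sub_self, smul_eq_mul] at tr
  have hfr : finrank K V = 0 := by
    have h2 : (2:K) ≠ 0 := two_ne_zero
    have := mul_eq_zero.mp tr
    simp only [h2, false_or] at this
    exact_mod_cast this
  have hV0 : V = ⊥ := Submodule.finrank_eq_zero.mp hfr
  exact ⟨N, LinearMap.range_eq_bot.mp hV0⟩

/-- Product of `(A - a)` over a list of scalars. -/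
noncomputable def prodOp (A : Module.End K M) (l : List K) : Module.End K M :=
  (l.map fun a => A - a • 1).prod

@[simp] lemma prodOp_nil (A : Module.End K M) : prodOp A ([] : List K) = 1 := by
  simp [prodOp]

lemma prodOp_cons (A : Module.End K M) (a : K) (l : List K) :
    prodOp A (a :: l) = (A - a • 1) * prodOp A l := by
  simp [prodOp]

lemma prodOp_append (A : Module.End K M) (l : List K) (a : K) :
    prodOp A (l ++ [a]) = prodOp A l * (A - a • 1) := by
  simp [prodOp]

lemma prodOp_comm (A B G : Module.End K M) (h : ∀ x, A (G x) = G (B x)) (l : List K) (x : M) :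
    prodOp A l (G x) = G (prodOp B l x) := by
  induction l with
  | nil => simp
  | cons a t ih =>
    rw [prodOp_cons, prodOp_cons, Module.End.mul_apply, Module.End.mul_apply, ih]
    simp only [LinearMap.sub_apply, LinearMap.smul_apply, Module.End.one_apply, h, map_sub,
      map_smul]

lemma prodOp_eigen (A : Module.End K M) (c : K) (v : M) (hv : A v = c • v) (l : List K) :
    prodOp A l v = ((l.map fun a => c - a).prod) • v := by
  induction l with
  | nil => simp
  | cons a t ih =>
    rw [prodOp_cons, Module.End.mul_apply, ih, List.map_cons, List.prod_cons]
    simp only [map_smul, LinearMap.sub_apply, LinearMap.smul_apply, Module.End.one_apply, hv]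
    module

/-- The fundamental commutation identity `E Fⁿ⁺¹ = Fⁿ⁺¹ E + (n+1) Fⁿ (H - n)`. -/
lemma comm_pow (E F H : Module.End K M) (hEF : E * F - F * E = H)
    (hHF : H * F - F * H = -((2:K) • F)) (n : ℕ) :
    E * F ^ (n+1) = F ^ (n+1) * E + ((n+1 : K)) • (F ^ n * (H - (n:K) • 1)) := by
  have hEF' : E * F = F * E + H := by rw [← hEF]; abel
  have hHF' : H * F = F * H - (2:K) • F := by have h := hHF; rw [sub_eq_iff_eq_add] at h; rw [h]; abel
  induction n with
  | zero => simpa using hEF'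
  | succ n ih =>
    rw [pow_succ, ← mul_assoc, ih, add_mul, smul_mul_assoc, mul_assoc, hEF',
      mul_assoc (F^n), sub_mul, hHF', smul_mul_assoc, mul_add, ← mul_assoc, ← pow_succ]
    push_cast
    have h1 : F ^ n * (F * H) = F ^ (n+1) * H := by rw [← mul_assoc, ← pow_succ]
    have h2 : F ^ n * F = F ^ (n+1) := by rw [← pow_succ]
    simp only [mul_sub, mul_smul_comm, one_mul, mul_one, h1, h2]
    module

/-- On `ker E`, the product `∏_{j<n} (H - j)` vanishes as soon as `Fⁿ` does. -/
lemma ker_lemma (E F H : Module.End K M) (hHE : H * E - E * H = (2:K) • E)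
    (hEF : E * F - F * E = H) (hHF : H * F - F * H = -((2:K) • F)) :
    ∀ (n : ℕ) (v : M), E v = 0 → (F ^ n) v = 0 →
      prodOp H ((List.range n).map (Nat.cast : ℕ → K)) v = 0 := by
  intro n
  induction n with
  | zero => intro v _ h0; simpa using h0
  | succ n ih =>
    intro v hv hFv
    have hid := congrArg (fun (f : Module.End K M) => f v) (comm_pow E F H hEF hHF n)
    simp only [Module.End.mul_apply, LinearMap.add_apply, LinearMap.smul_apply] at hid
    rw [hFv, map_zero, hv, map_zero, zero_add] at hid
    have hne : ((n:K)+1) ≠ 0 := by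
      have : ((n+1 : ℕ) : K) ≠ 0 := Nat.cast_ne_zero.mpr (Nat.succ_ne_zero n)
      push_cast at this; exact this
    have hF' : (F ^ n) ((H - (n:K) • 1) v) = 0 := by
      have h0 := hid.symm
      rw [smul_eq_zero] at h0
      exact h0.resolve_left hne
    have hE' : E ((H - (n:K) • 1) v) = 0 := by
      have h := congrArg (fun (f : Module.End K M) => f v) hHE
      simp only [LinearMap.sub_apply, Module.End.mul_apply, LinearMap.smul_apply] at h
      rw [hv, map_zero] at h
      simp only [map_sub, map_smul, LinearMap.sub_apply, LinearMap.smul_apply,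
        Module.End.one_apply, hv]
      have hEH : E (H v) = 0 := by simpa using h
      rw [hEH]
      simp
    have hres := ih _ hE' hF'
    rw [List.range_succ, List.map_append, List.map_cons, List.map_nil, prodOp_append,
      Module.End.mul_apply]
    exact hres

lemma prodOp_mk {P : Submodule K M} (A : Module.End K M) (Ab : Module.End K (M ⧸ P))
    (hc : ∀ x : M, Ab (P.mkQ x) = P.mkQ (A x)) (l : List K) (x : M) :
    prodOp Ab l (P.mkQ x) = P.mkQ (prodOp A l x) := by
  induction l with
  | nil => simp
  | cons a t ih =>
    rw [prodOp_cons, prodOp_cons, Module.End.mul_apply, Module.End.mul_apply, ih]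
    simp only [LinearMap.sub_apply, LinearMap.smul_apply, Module.End.one_apply, hc, map_sub,
      map_smul]

lemma pow_mk {P : Submodule K M} (A : Module.End K M) (Ab : Module.End K (M ⧸ P))
    (hc : ∀ x : M, Ab (P.mkQ x) = P.mkQ (A x)) (n : ℕ) (x : M) :
    (Ab ^ n) (P.mkQ x) = P.mkQ ((A ^ n) x) := by
  induction n with
  | zero => simp
  | succ n ih =>
    rw [pow_succ', pow_succ', Module.End.mul_apply, Module.End.mul_apply, ih, hc]

/-- Core lemma: an `H`-eigenvector with natural eigenvalue, killed by `E` and in the range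
of `F`, must vanish. -/
lemma eigen_case (E F H : Module.End K M) (hHE : H * E - E * H = (2:K) • E)
    (hEF : E * F - F * E = H) (hHF : H * F - F * H = -((2:K) • F))
    (v w : M) (k : ℕ) (hv : E v = 0) (hH : H v = (k:K) • v) (hw : F w = v) :
    v = 0 := by
  have hHFpt : ∀ x, H (F x) = F (H x) - (2:K) • F x := by
    intro x
    have h := congrArg (fun (f : Module.End K M) => f x) hHF
    simp only [LinearMap.sub_apply, Module.End.mul_apply, LinearMap.neg_apply,
      LinearMap.smul_apply] at h
    have := sub_eq_iff_eq_add.mp h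
    rw [this]; abel
  have hHEpt : ∀ x, H (E x) = E (H x) + (2:K) • E x := by
    intro x
    have h := congrArg (fun (f : Module.End K M) => f x) hHE
    simp only [LinearMap.sub_apply, Module.End.mul_apply, LinearMap.smul_apply] at h
    have := sub_eq_iff_eq_add.mp h
    rw [this]; abel
  obtain ⟨T, hT⟩ : IsNilpotent F := by
    refine nilp_aux F (-H) ?_
    have : (-H) * F - F * (-H) = -(H * F - F * H) := by noncomm_ring
    rw [this, hHF, neg_neg]
  obtain ⟨S, hS⟩ : IsNilpotent E := nilp_aux E H hHE
  have hFi : ∀ i : ℕ, H ((F^i) v) = ((k:K) - 2*(i:K)) • (F^i) v := by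
    intro i
    induction i with
    | zero => simpa using hH
    | succ i ih =>
      have hp : (F^(i+1)) v = F ((F^i) v) := by rw [pow_succ', Module.End.mul_apply]
      rw [hp, hHFpt, ih, map_smul]
      push_cast
      module
  set P := Submodule.span K (Set.range fun i : ℕ => (F^i) v) with hP
  have memP : ∀ i, (F^i) v ∈ P := fun i => Submodule.subset_span ⟨i, rfl⟩
  have hPF : ∀ x ∈ P, F x ∈ P := by
    intro x hx
    induction hx using Submodule.span_induction with
    | mem x h =>
      obtain ⟨i, rfl⟩ := h
      have : F ((F^i) v) = (F^(i+1)) v := by rw [pow_succ', Module.End.mul_apply]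
      rw [this]; exact memP _
    | zero => simp
    | add x y _ _ hx hy => rw [map_add]; exact add_mem hx hy
    | smul a x _ hx => rw [map_smul]; exact Submodule.smul_mem _ _ hx
  have hPH : ∀ x ∈ P, H x ∈ P := by
    intro x hx
    induction hx using Submodule.span_induction with
    | mem x h =>
      obtain ⟨i, rfl⟩ := h
      rw [hFi i]; exact Submodule.smul_mem _ _ (memP i)
    | zero => simp
    | add x y _ _ hx hy => rw [map_add]; exact add_mem hx hy
    | smul a x _ hx => rw [map_smul]; exact Submodule.smul_mem _ _ hx
  have hPE : ∀ x ∈ P, E x ∈ P := by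
    intro x hx
    induction hx using Submodule.span_induction with
    | mem x h =>
      obtain ⟨i, rfl⟩ := h
      match i with
      | 0 => simpa [hv] using P.zero_mem
      | (i+1) =>
        have hid := congrArg (fun (f : Module.End K M) => f v) (comm_pow E F H hEF hHF i)
        simp only [Module.End.mul_apply, LinearMap.add_apply, LinearMap.smul_apply] at hid
        rw [hv, map_zero, zero_add] at hid
        rw [hid]
        refine Submodule.smul_mem _ _ ?_
        have : (H - (i:K) • 1) v = ((k:K) - (i:K)) • v := by
          simp only [LinearMap.sub_apply, LinearMap.smul_apply, Module.End.one_apply, hH]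
          module
        rw [this, map_smul]
        exact Submodule.smul_mem _ _ (memP i)
    | zero => simp
    | add x y _ _ hx hy => rw [map_add]; exact add_mem hx hy
    | smul a x _ hx => rw [map_smul]; exact Submodule.smul_mem _ _ hx
  -- quotient endomorphisms
  let Eb : Module.End K (M ⧸ P) := P.mapQ P E hPE
  let Fb : Module.End K (M ⧸ P) := P.mapQ P F hPF
  let Hb : Module.End K (M ⧸ P) := P.mapQ P H hPH
  have cE : ∀ x : M, Eb (P.mkQ x) = P.mkQ (E x) := fun x => by
    simp [Eb, Submodule.mapQ_apply]
  have cF : ∀ x : M, Fb (P.mkQ x) = P.mkQ (F x) := fun x => by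
    simp [Fb, Submodule.mapQ_apply]
  have cH : ∀ x : M, Hb (P.mkQ x) = P.mkQ (H x) := fun x => by
    simp [Hb, Submodule.mapQ_apply]
  have r1 : (-Hb) * Fb - Fb * (-Hb) = (2:K) • Fb := by
    refine Submodule.linearMap_qext P (LinearMap.ext fun x => ?_)
    have hm : F (H x) - H (F x) = (2:K) • F x := by rw [hHFpt x]; abel
    calc ((-Hb) * Fb - Fb * (-Hb)).comp P.mkQ x
        = P.mkQ (F (H x) - H (F x)) := by
          simp only [LinearMap.comp_apply, LinearMap.sub_apply, Module.End.mul_apply,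
            LinearMap.neg_apply, cE, cF, cH, map_neg, map_sub]
          abel
      _ = ((2:K) • Fb).comp P.mkQ x := by
          rw [hm]
          simp only [LinearMap.comp_apply, LinearMap.smul_apply, cF, map_smul]
  have r2 : Fb * Eb - Eb * Fb = -Hb := by
    refine Submodule.linearMap_qext P (LinearMap.ext fun x => ?_)
    have hm : F (E x) - E (F x) = -(H x) := by
      have h := congrArg (fun (f : Module.End K M) => f x) hEF
      simp only [LinearMap.sub_apply, Module.End.mul_apply] at h
      rw [← h]; abel
    calc (Fb * Eb - Eb * Fb).comp P.mkQ x
        = P.mkQ (F (E x) - E (F x)) := by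
          simp only [LinearMap.comp_apply, LinearMap.sub_apply, Module.End.mul_apply,
            cE, cF, map_sub]
      _ = (-Hb).comp P.mkQ x := by
          rw [hm]
          simp only [LinearMap.comp_apply, LinearMap.neg_apply, cH, map_neg]
  have r3 : (-Hb) * Eb - Eb * (-Hb) = -((2:K) • Eb) := by
    refine Submodule.linearMap_qext P (LinearMap.ext fun x => ?_)
    have hm : E (H x) - H (E x) = -((2:K) • E x) := by rw [hHEpt x]; abel
    calc ((-Hb) * Eb - Eb * (-Hb)).comp P.mkQ x
        = P.mkQ (E (H x) - H (E x)) := by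
          simp only [LinearMap.comp_apply, LinearMap.sub_apply, Module.End.mul_apply,
            LinearMap.neg_apply, cE, cH, map_neg, map_sub]
          abel
      _ = (-((2:K) • Eb)).comp P.mkQ x := by
          rw [hm]
          simp only [LinearMap.comp_apply, LinearMap.neg_apply, LinearMap.smul_apply, cE,
            map_neg, map_smul]
  -- apply the kernel lemma on the quotient to `mk w`
  have hFbw : Fb (P.mkQ w) = 0 := by
    rw [cF, hw, Submodule.mkQ_apply, Submodule.Quotient.mk_eq_zero]
    exact (pow_zero F ▸ memP 0 : (1 : Module.End K M) v ∈ P)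
  have hEbw : (Eb ^ S) (P.mkQ w) = 0 := by
    rw [pow_mk E Eb cE S w, hS]
    simp
  have hker := ker_lemma Fb Eb (-Hb) r1 r2 r3 S (P.mkQ w) hFbw hEbw
  have hcH' : ∀ x : M, (-Hb) (P.mkQ x) = P.mkQ ((-H) x) := fun x => by
    simp only [LinearMap.neg_apply, cH, map_neg]
  rw [prodOp_mk (-H) (-Hb) hcH' _ w] at hker
  have hqP : prodOp (-H) ((List.range S).map (Nat.cast : ℕ → K)) w ∈ P := by
    rwa [Submodule.mkQ_apply, Submodule.Quotient.mk_eq_zero] at hker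
  -- now push with `F` into the span of the strictly lower part of the string
  set P₁ := Submodule.span K (Set.range fun i : ℕ => (F^(i+1)) v) with hP₁
  have hFP₁ : ∀ x ∈ P, F x ∈ P₁ := by
    intro x hx
    induction hx using Submodule.span_induction with
    | mem x h =>
      obtain ⟨i, rfl⟩ := h
      have : F ((F^i) v) = (F^(i+1)) v := by rw [pow_succ', Module.End.mul_apply]
      rw [this]
      exact Submodule.subset_span ⟨i, rfl⟩
    | zero => simp
    | add x y _ _ hx hy => rw [map_add]; exact add_mem hx hy
    | smul a x _ hx => rw [map_smul]; exact Submodule.smul_mem _ _ hx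
  have hFq : F (prodOp (-H) ((List.range S).map (Nat.cast : ℕ → K)) w) ∈ P₁ := hFP₁ _ hqP
  -- compute `F (prodOp (-H) l w)` as a nonzero multiple of `v`
  have hcomm : ∀ x, (-H - (2:K) • 1) (F x) = F ((-H) x) := by
    intro x
    simp only [LinearMap.sub_apply, LinearMap.neg_apply, LinearMap.smul_apply,
      Module.End.one_apply, hHFpt x, map_neg]
    abel
  have hFcalc := prodOp_comm (-H - (2:K) • 1) (-H) F hcomm
    ((List.range S).map (Nat.cast : ℕ → K)) w
  rw [hw] at hFcalc
  have heig : (-H - (2:K) • 1) v = (-(k:K) - 2) • v := by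
    simp only [LinearMap.sub_apply, LinearMap.neg_apply, LinearMap.smul_apply,
      Module.End.one_apply, hH]
    module
  have hval := prodOp_eigen (-H - (2:K) • 1) (-(k:K) - 2) v heig
    ((List.range S).map (Nat.cast : ℕ → K))
  set c : K := (((List.range S).map (Nat.cast : ℕ → K)).map fun a => (-(k:K) - 2) - a).prod
    with hc
  have hc0 : c ≠ 0 := by
    rw [hc]
    refine List.prod_ne_zero ?_
    intro h0
    simp only [List.map_map, List.mem_map, Function.comp_apply] at h0
    obtain ⟨j, _, hj⟩ := h0
    have : ((k + 2 + j : ℕ) : K) = 0 := by push_cast; linear_combination -hj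
    exact (Nat.cast_ne_zero.mpr (by omega)) this
  have hvP₁ : v ∈ P₁ := by
    have : c • v ∈ P₁ := by rw [← hval, hFcalc]; exact hFq
    have h2 := Submodule.smul_mem P₁ c⁻¹ this
    rwa [smul_smul, inv_mul_cancel₀ hc0, one_smul] at h2
  -- the killing operator
  set l' : List K := (List.range T).map (fun j : ℕ => (k:K) - 2*(j:K) - 2) with hl'
  have hgen : ∀ i : ℕ, prodOp H l' ((F^(i+1)) v) = 0 := by
    intro i
    by_cases hiT : i < T
    · have heigi : H ((F^(i+1)) v) = ((k:K) - 2*(i:K) - 2) • (F^(i+1)) v := by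
        rw [hFi (i+1)]
        push_cast
        module
      rw [prodOp_eigen H ((k:K) - 2*(i:K) - 2) _ heigi]
      have hmem : (0:K) ∈ (l'.map fun a => ((k:K) - 2*(i:K) - 2) - a) := by
        rw [hl', List.map_map, List.mem_map]
        exact ⟨i, List.mem_range.mpr hiT, by simp⟩
      rw [List.prod_eq_zero hmem, zero_smul]
    · have hzero : (F^(i+1)) v = 0 := by
        have hsplit : F^(i+1) = F^(i+1-T) * F^T := by
          rw [← pow_add]
          congr 1
          omega
        rw [hsplit, Module.End.mul_apply, hT]
        simp
      rw [hzero, map_zero]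
  have hP₁ker : P₁ ≤ LinearMap.ker (prodOp H l') := by
    rw [hP₁, Submodule.span_le]
    rintro _ ⟨i, rfl⟩
    exact hgen i
  have hGv : prodOp H l' v = 0 := hP₁ker hvP₁
  rw [prodOp_eigen H (k:K) v hH] at hGv
  rw [smul_eq_zero] at hGv
  refine hGv.resolve_left ?_
  rw [hl']
  refine List.prod_ne_zero ?_
  intro h0
  simp only [List.map_map, List.mem_map, Function.comp_apply] at h0
  obtain ⟨j, _, hj⟩ := h0
  have : ((2*j + 2 : ℕ) : K) = 0 := by push_cast; linear_combination hj
  exact (Nat.cast_ne_zero.mpr (by omega)) this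

/-- The key vanishing: `ker E ⊓ range F = ⊥`. -/
lemma inf_bot (E F H : Module.End K M) (hHE : H * E - E * H = (2:K) • E)
    (hEF : E * F - F * E = H) (hHF : H * F - F * H = -((2:K) • F)) :
    LinearMap.ker E ⊓ LinearMap.range F = ⊥ := by
  have hHEpt : ∀ x, H (E x) = E (H x) + (2:K) • E x := by
    intro x
    have hh := congrArg (fun (f : Module.End K M) => f x) hHE
    simp only [LinearMap.sub_apply, Module.End.mul_apply, LinearMap.smul_apply] at hh
    have := sub_eq_iff_eq_add.mp hh
    rw [this]; abel
  have hHFpt : ∀ x, H (F x) = F (H x) - (2:K) • F x := by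
    intro x
    have hh := congrArg (fun (f : Module.End K M) => f x) hHF
    simp only [LinearMap.sub_apply, Module.End.mul_apply, LinearMap.neg_apply,
      LinearMap.smul_apply] at hh
    have := sub_eq_iff_eq_add.mp hh
    rw [this]; abel
  have listB : ∀ (l : List ℕ) (v : M), E v = 0 → v ∈ LinearMap.range F →
      prodOp H (l.map (Nat.cast : ℕ → K)) v = 0 → v = 0 := by
    intro l
    induction l with
    | nil => intro v _ _ hp; simpa using hp
    | cons j t ih =>
      intro v hv hvr hpr
      obtain ⟨y, hy⟩ := hvr
      set u := prodOp H (t.map (Nat.cast : ℕ → K)) v with hu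
      have hEu : E u = 0 := by
        have hcm : ∀ x, (H - (2:K) • 1) (E x) = E (H x) := by
          intro x
          simp only [LinearMap.sub_apply, LinearMap.smul_apply, Module.End.one_apply, hHEpt x]
          abel
        have hq := prodOp_comm (H - (2:K) • 1) H E hcm (t.map (Nat.cast : ℕ → K)) v
        rw [hv, map_zero] at hq
        exact hq.symm
      have hwit : F (prodOp (H - (2:K) • 1) (t.map (Nat.cast : ℕ → K)) y) = u := by
        have hcm2 : ∀ x, H (F x) = F ((H - (2:K) • 1) x) := by
          intro x
          simp only [LinearMap.sub_apply, LinearMap.smul_apply, Module.End.one_apply, hHFpt x,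
            map_sub, map_smul]
        have hq := prodOp_comm H (H - (2:K) • 1) F hcm2 (t.map (Nat.cast : ℕ → K)) y
        rw [hy] at hq
        exact hq.symm
      have hHu : H u = (j:K) • u := by
        rw [List.map_cons, prodOp_cons, Module.End.mul_apply] at hpr
        have : (H - (j:K) • 1) u = 0 := hpr
        simp only [LinearMap.sub_apply, LinearMap.smul_apply, Module.End.one_apply,
          sub_eq_zero] at this
        exact this
      have hu0 : u = 0 :=
        eigen_case E F H hHE hEF hHF u _ j hEu hHu hwit
      exact ih v hv ⟨y, hy⟩ hu0
  rw [eq_bot_iff]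
  rintro v ⟨hv1, hv2⟩
  obtain ⟨T, hT⟩ : IsNilpotent F := by
    refine nilp_aux F (-H) ?_
    have : (-H) * F - F * (-H) = -(H * F - F * H) := by noncomm_ring
    rw [this, hHF, neg_neg]
  have hFv : (F ^ T) v = 0 := by rw [hT]; simp
  have h := ker_lemma E F H hHE hEF hHF T v (LinearMap.mem_ker.mp hv1) hFv
  rw [Submodule.mem_bot]
  exact listB (List.range T) v (LinearMap.mem_ker.mp hv1) hv2 h

end core

theorem stmt4 {K L M : Type*} [Field K] [CharZero K] [LieRing L] [LieAlgebra K L]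
    [AddCommGroup M] [Module K M] [LieRingModule L M] [LieModule K L M]
    [FiniteDimensional K M]
    -- an `sl₂`-triple `(h, e, f)` in `L`:
    (h e f : L)
    (hhe : ⁅h, e⁆ = (2 : K) • e) (hhf : ⁅h, f⁆ = (-2 : K) • f) (hef : ⁅e, f⁆ = h) :
    -- `M` is the internal direct sum of `ker ρ(e)` and `range ρ(f)`:
    LinearMap.ker (LieModule.toEnd K L M e) ⊓ LinearMap.range (LieModule.toEnd K L M f) = ⊥ ∧
    LinearMap.ker (LieModule.toEnd K L M e) ⊔ LinearMap.range (LieModule.toEnd K L M f) = ⊤ := by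
  set E := LieModule.toEnd K L M e with hEdef
  set F := LieModule.toEnd K L M f with hFdef
  set H := LieModule.toEnd K L M h with hHdef
  letI : LieRing (Module.End K M) := LieRing.ofAssociativeRing
  have hHE : H * E - E * H = (2:K) • E := by
    have h1 := (LieModule.toEnd K L M).map_lie (x := h) (y := e)
    rw [hhe, map_smul, Ring.lie_def] at h1
    exact h1.symm
  have hHF : H * F - F * H = -((2:K) • F) := by
    have h1 := (LieModule.toEnd K L M).map_lie (x := h) (y := f)
    rw [hhf, map_smul, Ring.lie_def] at h1
    rw [← h1, neg_smul]
  have hEF : E * F - F * E = H := by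
    have h1 := (LieModule.toEnd K L M).map_lie (x := e) (y := f)
    rw [hef, Ring.lie_def] at h1
    exact h1.symm
  have hinf : LinearMap.ker E ⊓ LinearMap.range F = ⊥ := inf_bot E F H hHE hEF hHF
  have hinf2 : LinearMap.ker F ⊓ LinearMap.range E = ⊥ := by
    refine inf_bot F E (-H) ?_ ?_ ?_
    · have : (-H) * F - F * (-H) = -(H * F - F * H) := by noncomm_ring
      rw [this, hHF, neg_neg]
    · have : F * E - E * F = -(E * F - F * E) := by noncomm_ring
      rw [this, hEF]
    · have : (-H) * E - E * (-H) = -(H * E - E * H) := by noncomm_ring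
      rw [this, hHE]
  refine ⟨hinf, ?_⟩
  have h1 := LinearMap.finrank_range_add_finrank_ker E
  have h2 := LinearMap.finrank_range_add_finrank_ker F
  have h3 := Submodule.finrank_sup_add_finrank_inf_eq (LinearMap.ker E) (LinearMap.range F)
  have h4 := Submodule.finrank_sup_add_finrank_inf_eq (LinearMap.ker F) (LinearMap.range E)
  rw [hinf, finrank_bot] at h3
  rw [hinf2, finrank_bot] at h4
  have h5 := Submodule.finrank_le (LinearMap.ker F ⊔ LinearMap.range E)
  have h6 := Submodule.finrank_le (LinearMap.ker E ⊔ LinearMap.range F)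
  refine Submodule.eq_top_of_finrank_eq ?_
  omega
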